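/- A simplicial complex Δ on [n] of dimension d-1 is Cohen-Macaulay (in the sense of Reisner's criterion) if and only if H̃_p(Δ_{-R}) = 0 for all subsets R ⊆ [n] with p + |R| = d - 2, where Δ_{-R} denotes the restriction of Δ to [n]\R. -/

import Mathlib

open Finset

namespace SCx

variable (k : Type) [Field k] {n : ℕ}

/-- An (abstract) simplicial complex on the vertex set `Fin n`:
a set of finsets closed under taking subsets. -/
def IsComplex (Δ : Set (Finset (Fin n))) : Prop :=
  ∀ F ∈ Δ, ∀ G ⊆ F, G ∈ Δ

/-- Simplicial `p`-chains with coefficients in `k`: functions on the faces of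
cardinality `p+1`. -/
abbrev Chains (Δ : Set (Finset (Fin n))) (p : ℤ) : Type :=
  {F : Finset (Fin n) // F ∈ Δ ∧ (F.card : ℤ) = p + 1} → k

open Classical in
/-- The underlying function of the simplicial boundary map, written via its
transpose formula:
`(∂ f) G = ∑_{x : insert x G ∈ Δ} (-1)^{pos of x in insert x G} f (insert x G)`. -/
noncomputable def boundaryFun (Δ : Set (Finset (Fin n))) (p : ℤ)
    (f : Chains k Δ p) : Chains k Δ (p - 1) := fun G => ∑ x : Fin n,
  if h : x ∉ G.1 ∧ insert x G.1 ∈ Δ then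
    (-1 : k) ^ (G.1.filter (fun y => y < x)).card *
      f ⟨insert x G.1, h.2, by
        have hc := G.2.2
        rw [Finset.card_insert_of_notMem h.1]
        push_cast at hc ⊢
        omega⟩
  else 0

/-- The simplicial boundary map. -/
noncomputable def boundary (Δ : Set (Finset (Fin n))) (p : ℤ) :
    Chains k Δ p →ₗ[k] Chains k Δ (p - 1) where
  toFun := boundaryFun k Δ p
  map_add' f g := by
    funext G
    unfold boundaryFun
    rw [Pi.add_apply]
    rw [← Finset.sum_add_distrib]
    refine Finset.sum_congr rfl fun x _ => ?_
    split_ifs with h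
    · rw [Pi.add_apply]; ring
    · rw [add_zero]
  map_smul' c f := by
    funext G
    unfold boundaryFun
    simp only [RingHom.id_apply, Pi.smul_apply, smul_eq_mul, Finset.mul_sum]
    refine Finset.sum_congr rfl fun x _ => ?_
    split_ifs with h
    · ring
    · rw [mul_zero]

/-- Transport of chains along an equality of degrees. -/
noncomputable def chainsCongr (Δ : Set (Finset (Fin n))) {p q : ℤ} (h : p = q) :
    Chains k Δ p ≃ₗ[k] Chains k Δ q := by
  subst h; exact LinearEquiv.refl k _

noncomputable def cycles (Δ : Set (Finset (Fin n))) (p : ℤ) : Submodule k (Chains k Δ p) :=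
  LinearMap.ker (boundary k Δ p)

noncomputable def boundaries (Δ : Set (Finset (Fin n))) (p : ℤ) : Submodule k (Chains k Δ p) :=
  LinearMap.range ((chainsCongr k Δ (show p + 1 - 1 = p by ring)).toLinearMap ∘ₗ
    boundary k Δ (p + 1))

/-- Reduced simplicial homology of `Δ` in degree `p`, with coefficients in the field `k`,
defined as cycles modulo (boundaries intersected with cycles).  With this convention
`H̃_{-1}({∅}) = k`. -/
abbrev ReducedHomology (Δ : Set (Finset (Fin n))) (p : ℤ) :=
  ↥(cycles k Δ p) ⧸ (Submodule.comap (cycles k Δ p).subtype (boundaries k Δ p))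

/-- The Alexander dual of `Δ`. -/
def dual (Δ : Set (Finset (Fin n))) : Set (Finset (Fin n)) := {F | Fᶜ ∉ Δ}

/-- The restriction `Δ_R` of `Δ` to a vertex subset `R`. -/
def restrict (Δ : Set (Finset (Fin n))) (R : Finset (Fin n)) : Set (Finset (Fin n)) :=
  {F | F ∈ Δ ∧ F ⊆ R}

/-- The link `lk_Δ S`. -/
def link (Δ : Set (Finset (Fin n))) (S : Finset (Fin n)) : Set (Finset (Fin n)) :=
  {F | Disjoint F S ∧ F ∪ S ∈ Δ}

/-- `Δ_R^{S,T} = {F ⊆ R : F ∪ S ∈ Δ}` (for `T` the complement of `R ∪ S`). -/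
def sub (Δ : Set (Finset (Fin n))) (R S : Finset (Fin n)) : Set (Finset (Fin n)) :=
  {F | F ⊆ R ∧ F ∪ S ∈ Δ}

/-- `Δ` has dimension `d - 1`, i.e. `d` is the maximal cardinality of a face. -/
def IsDim (Δ : Set (Finset (Fin n))) (d : ℕ) : Prop :=
  (∀ F ∈ Δ, F.card ≤ d) ∧ ∃ F ∈ Δ, F.card = d

/-- `Δ` has frame dimension `c - 1`, i.e. `c` is the largest integer such that
every `c`-subset of `[n]` is a face of `Δ`. -/
def IsFrame (Δ : Set (Finset (Fin n))) (c : ℕ) : Prop :=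
  (∀ F : Finset (Fin n), F.card ≤ c → F ∈ Δ) ∧
    ∃ F : Finset (Fin n), F.card = c + 1 ∧ F ∉ Δ

/-- A facet: a maximal face. -/
def IsFacet (Δ : Set (Finset (Fin n))) (F : Finset (Fin n)) : Prop :=
  F ∈ Δ ∧ ∀ G ∈ Δ, F ⊆ G → F = G

/-! ### Auxiliary machinery for the proof of `stmt6`. -/

section Aux

/-- Total (degree-free) chains on a complex. -/
abbrev TC (Δ : Set (Finset (Fin n))) : Type := {F : Finset (Fin n) // F ∈ Δ} → k

/-- The incidence sign. -/
noncomputable def eps (y : Fin n) (G : Finset (Fin n)) : k :=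
  (-1 : k) ^ (G.filter (fun z => z < y)).card

open Classical in
/-- The total boundary operator. -/
noncomputable def TD (Δ : Set (Finset (Fin n))) (u : TC k Δ) : TC k Δ := fun G =>
  ∑ y : Fin n,
    if h : y ∉ G.1 ∧ insert y G.1 ∈ Δ then eps k y G.1 * u ⟨insert y G.1, h.2⟩ else 0

/-- A total chain is concentrated in degree `p`. -/
def deg (Δ : Set (Finset (Fin n))) (p : ℤ) (u : TC k Δ) : Prop :=
  ∀ F, u F ≠ 0 → (F.1.card : ℤ) = p + 1

/-- Vanishing of reduced homology in degree `p`, phrased at the level of total chains. -/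
def V' (Δ : Set (Finset (Fin n))) (p : ℤ) : Prop :=
  ∀ u : TC k Δ, deg k Δ p u → TD k Δ u = 0 →
    ∃ v : TC k Δ, deg k Δ (p + 1) v ∧ TD k Δ v = u

variable {k}

lemma eps_mul_self (y : Fin n) (G : Finset (Fin n)) : eps k y G * eps k y G = 1 := by
  rw [eps, ← pow_add]
  exact Even.neg_one_pow ⟨_, rfl⟩

lemma eps_ne_zero (y : Fin n) (G : Finset (Fin n)) : eps k y G ≠ 0 := by
  intro h
  have := eps_mul_self (k := k) y G
  rw [h, mul_zero] at this
  exact zero_ne_one this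

lemma eps_insert {y z : Fin n} (hy : y ∉ G) :
    eps k z (insert y G) = eps k z G * (if y < z then -1 else 1) := by
  classical
  rw [eps, eps, Finset.filter_insert]
  split_ifs with h
  · rw [Finset.card_insert_of_notMem (by simp [Finset.mem_filter, hy]), pow_succ]
  · rw [mul_one]

lemma eps_skew {y z : Fin n} (hyz : y ≠ z) {G : Finset (Fin n)} (hy : y ∉ G) (hz : z ∉ G) :
    eps k y G * eps k z (insert y G) + eps k z G * eps k y (insert z G) = 0 := by
  rw [eps_insert hy, eps_insert hz]
  rcases lt_or_gt_of_ne hyz with h | h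
  · rw [if_pos h, if_neg (asymm h)]; ring
  · rw [if_neg (asymm h), if_pos h]; ring

lemma TD_add (Δ : Set (Finset (Fin n))) (u v : TC k Δ) :
    TD k Δ (u + v) = TD k Δ u + TD k Δ v := by
  funext G
  rw [Pi.add_apply, TD, TD, TD, ← Finset.sum_add_distrib]
  refine Finset.sum_congr rfl fun y _ => ?_
  split_ifs with h
  · rw [Pi.add_apply]; ring
  · rw [add_zero]

lemma TD_neg (Δ : Set (Finset (Fin n))) (u : TC k Δ) : TD k Δ (-u) = -(TD k Δ u) := by
  funext G
  rw [Pi.neg_apply, TD, TD, ← Finset.sum_neg_distrib]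
  refine Finset.sum_congr rfl fun y _ => ?_
  split_ifs with h
  · rw [Pi.neg_apply]; ring
  · rw [neg_zero]

lemma TD_sub (Δ : Set (Finset (Fin n))) (u v : TC k Δ) :
    TD k Δ (u - v) = TD k Δ u - TD k Δ v := by
  rw [sub_eq_add_neg, TD_add, TD_neg, sub_eq_add_neg]

lemma TD_zero (Δ : Set (Finset (Fin n))) : TD k Δ (0 : TC k Δ) = 0 := by
  funext G
  rw [TD]
  refine Finset.sum_eq_zero fun y _ => ?_
  split_ifs with h
  · rw [Pi.zero_apply, mul_zero]
  · rfl

lemma TD_TD (Δ : Set (Finset (Fin n))) (hΔ : IsComplex Δ) (u : TC k Δ) :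
    TD k Δ (TD k Δ u) = 0 := by
  classical
  funext G
  show (∑ y : Fin n, _) = (0 : k)
  have hrw : ∀ y : Fin n,
      (if h : y ∉ G.1 ∧ insert y G.1 ∈ Δ then eps k y G.1 * TD k Δ u ⟨insert y G.1, h.2⟩ else 0)
      = ∑ z : Fin n,
        (if h : y ∉ G.1 ∧ z ∉ insert y G.1 ∧ insert z (insert y G.1) ∈ Δ then
          eps k y G.1 * eps k z (insert y G.1) *
            u ⟨insert z (insert y G.1), h.2.2⟩ else 0) := by
    intro y
    split_ifs with h
    · rw [TD, Finset.mul_sum]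
      refine Finset.sum_congr rfl fun z _ => ?_
      by_cases hz : z ∉ insert y G.1 ∧ insert z (insert y G.1) ∈ Δ
      · rw [dif_pos hz, dif_pos ⟨h.1, hz⟩, mul_assoc]
      · rw [dif_neg hz, dif_neg (by tauto), mul_zero]
    · refine (Finset.sum_eq_zero fun z _ => ?_).symm
      rw [dif_neg]
      rintro ⟨hy, hz, hmem⟩
      exact h ⟨hy, hΔ _ hmem _ (Finset.subset_insert _ _)⟩
  rw [Finset.sum_congr rfl fun y _ => hrw y, ← Finset.sum_product']
  set t : Fin n × Fin n → k := fun yz =>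
    (if h : yz.1 ∉ G.1 ∧ yz.2 ∉ insert yz.1 G.1 ∧ insert yz.2 (insert yz.1 G.1) ∈ Δ then
      eps k yz.1 G.1 * eps k yz.2 (insert yz.1 G.1) *
        u ⟨insert yz.2 (insert yz.1 G.1), h.2.2⟩ else 0) with ht
  have hcancel : ∀ (a : Fin n × Fin n), a ∈ Finset.univ ×ˢ Finset.univ →
      t a + t (a.2, a.1) = 0 := by
    rintro ⟨y, z⟩ -
    simp only [ht]
    by_cases hc : y ∉ G.1 ∧ z ∉ insert y G.1 ∧ insert z (insert y G.1) ∈ Δ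
    · have hyz : y ≠ z := fun h => hc.2.1 (h ▸ Finset.mem_insert_self y G.1)
      have hzG : z ∉ G.1 := fun h => hc.2.1 (Finset.mem_insert_of_mem h)
      have hsets : insert z (insert y G.1) = insert y (insert z G.1) := Finset.insert_comm _ _ _
      have hc' : z ∉ G.1 ∧ y ∉ insert z G.1 ∧ insert y (insert z G.1) ∈ Δ := by
        refine ⟨hzG, ?_, hsets ▸ hc.2.2⟩
        simp only [Finset.mem_insert, not_or]
        exact ⟨hyz, hc.1⟩
      rw [dif_pos hc, dif_pos hc']
      have harg : (⟨insert z (insert y G.1), hc.2.2⟩ :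
          {F : Finset (Fin n) // F ∈ Δ}) = ⟨insert y (insert z G.1), hc'.2.2⟩ :=
        Subtype.ext hsets
      rw [harg]
      have := eps_skew (k := k) hyz hc.1 hzG
      set c := u ⟨insert y (insert z G.1), hc'.2.2⟩
      calc eps k y G.1 * eps k z (insert y G.1) * c +
            eps k z G.1 * eps k y (insert z G.1) * c
          = (eps k y G.1 * eps k z (insert y G.1) +
              eps k z G.1 * eps k y (insert z G.1)) * c := by ring
        _ = 0 := by rw [this, zero_mul]
    · rw [dif_neg hc, dif_neg, add_zero]
      rintro ⟨h1, h2, h3⟩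
      have hsets : insert y (insert z G.1) = insert z (insert y G.1) := Finset.insert_comm _ _ _
      refine hc ⟨fun h => h2 (Finset.mem_insert_of_mem h), ?_, hsets ▸ h3⟩
      simp only [Finset.mem_insert, not_or]
      exact ⟨fun h => h2 (h ▸ Finset.mem_insert_self _ _), h1⟩
  have hfix : ∀ (a : Fin n × Fin n), a ∈ Finset.univ ×ˢ Finset.univ →
      t a ≠ 0 → (a.2, a.1) ≠ a := by
    rintro ⟨y, z⟩ - hne heq
    apply hne
    have hzy : z = y := (Prod.ext_iff.mp heq).1
    simp only [ht]
    rw [dif_neg]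
    rintro ⟨hy, hz, -⟩
    subst hzy
    exact hz (Finset.mem_insert_self _ _)
  exact Finset.sum_involution (fun a _ => (a.2, a.1)) hcancel hfix
    (fun a ha => Finset.mem_univ _) (fun a ha => rfl)

variable (k)

open Classical in
/-- Extension of a `p`-chain to a total chain (by zero). -/
noncomputable def extC (Δ : Set (Finset (Fin n))) (p : ℤ) (f : Chains k Δ p) : TC k Δ :=
  fun F => if h : (F.1.card : ℤ) = p + 1 then f ⟨F.1, F.2, h⟩ else 0

/-- Restriction of a total chain to a `p`-chain. -/
def resC (Δ : Set (Finset (Fin n))) (p : ℤ) (u : TC k Δ) : Chains k Δ p :=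
  fun F => u ⟨F.1, F.2.1⟩

variable {k}

lemma boundary_apply (Δ : Set (Finset (Fin n))) (p : ℤ) (f : Chains k Δ p) :
    boundary k Δ p f = boundaryFun k Δ p f := rfl

lemma deg_extC (Δ : Set (Finset (Fin n))) (p : ℤ) (f : Chains k Δ p) :
    deg k Δ p (extC k Δ p f) := by
  intro F hF
  by_contra h
  rw [extC, dif_neg h] at hF
  exact hF rfl

lemma extC_injective {Δ : Set (Finset (Fin n))} {p : ℤ} {f g : Chains k Δ p}
    (h : extC k Δ p f = extC k Δ p g) : f = g := by
  funext F
  have := congrFun h ⟨F.1, F.2.1⟩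
  rwa [extC, extC, dif_pos F.2.2, dif_pos F.2.2] at this

lemma extC_eq_zero {Δ : Set (Finset (Fin n))} {p : ℤ} {f : Chains k Δ p} :
    extC k Δ p f = 0 ↔ f = 0 := by
  constructor
  · intro h
    apply extC_injective (g := 0)
    rw [h]
    funext F
    rw [extC]
    split_ifs <;> rfl
  · rintro rfl
    funext F
    rw [extC]
    split_ifs <;> rfl

lemma extC_resC {Δ : Set (Finset (Fin n))} {p : ℤ} {u : TC k Δ} (h : deg k Δ p u) :
    extC k Δ p (resC k Δ p u) = u := by
  funext F
  rw [extC]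
  split_ifs with hc
  · rfl
  · by_contra h0
    exact hc (h F fun h' => h0 h'.symm)

lemma extC_chainsCongr (Δ : Set (Finset (Fin n))) {p q : ℤ} (h : p = q) (f : Chains k Δ p) :
    extC k Δ q (chainsCongr k Δ h f) = extC k Δ p f := by
  subst h; rfl

lemma chainsCongr_of_extC_eq {Δ : Set (Finset (Fin n))} {p q : ℤ} (h : p = q)
    {f : Chains k Δ p} {g : Chains k Δ q} (he : extC k Δ p f = extC k Δ q g) :
    chainsCongr k Δ h f = g := by
  subst h
  exact extC_injective he

lemma extC_boundary (Δ : Set (Finset (Fin n))) (p : ℤ) (f : Chains k Δ p) :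
    extC k Δ (p - 1) (boundary k Δ p f) = TD k Δ (extC k Δ p f) := by
  classical
  funext F
  by_cases h : (F.1.card : ℤ) = p - 1 + 1
  · rw [extC, dif_pos h, boundary_apply, boundaryFun, TD]
    refine Finset.sum_congr rfl fun y _ => ?_
    by_cases hy : y ∉ F.1 ∧ insert y F.1 ∈ Δ
    · rw [dif_pos hy, dif_pos hy, extC,
        dif_pos (show ((insert y F.1).card : ℤ) = p + 1 by
          rw [Finset.card_insert_of_notMem hy.1]; push_cast; omega)]
      rfl
    · rw [dif_neg hy, dif_neg hy]
  · rw [extC, dif_neg h]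
    symm
    rw [TD]
    refine Finset.sum_eq_zero fun y _ => ?_
    split_ifs with hy
    · rw [extC, dif_neg (show ¬((insert y F.1).card : ℤ) = p + 1 by
        rw [Finset.card_insert_of_notMem hy.1]; push_cast; omega), mul_zero]
    · rfl

lemma mem_cycles_iff {Δ : Set (Finset (Fin n))} {p : ℤ} {f : Chains k Δ p} :
    f ∈ cycles k Δ p ↔ TD k Δ (extC k Δ p f) = 0 := by
  rw [cycles, LinearMap.mem_ker, ← extC_boundary]
  constructor
  · intro h; rw [h]; exact extC_eq_zero.mpr rfl
  · intro h; exact extC_eq_zero.mp h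

lemma mem_boundaries_iff {Δ : Set (Finset (Fin n))} {p : ℤ} {f : Chains k Δ p} :
    f ∈ boundaries k Δ p ↔ ∃ v : TC k Δ, deg k Δ (p + 1) v ∧ TD k Δ v = extC k Δ p f := by
  rw [boundaries, LinearMap.mem_range]
  constructor
  · rintro ⟨g, hg⟩
    refine ⟨extC k Δ (p + 1) g, deg_extC _ _ _, ?_⟩
    rw [← extC_boundary, ← hg]
    rw [LinearMap.comp_apply]
    rw [← extC_chainsCongr Δ (show p + 1 - 1 = p by ring) (boundary k Δ (p + 1) g)]
    rfl
  · rintro ⟨v, hv1, hv2⟩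
    refine ⟨resC k Δ (p + 1) v, ?_⟩
    rw [LinearMap.comp_apply]
    show chainsCongr k Δ _ (boundary k Δ (p + 1) (resC k Δ (p + 1) v)) = f
    apply chainsCongr_of_extC_eq
    rw [extC_boundary, extC_resC hv1, hv2]

lemma subsingleton_iff_V' (Δ : Set (Finset (Fin n))) (p : ℤ) :
    Subsingleton (ReducedHomology k Δ p) ↔ V' k Δ p := by
  rw [Submodule.Quotient.subsingleton_iff, Submodule.comap_subtype_eq_top]
  constructor
  · intro hle u hdeg hTD
    have hc : resC k Δ p u ∈ cycles k Δ p :=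
      mem_cycles_iff.mpr (by rw [extC_resC hdeg]; exact hTD)
    obtain ⟨v, hv1, hv2⟩ := mem_boundaries_iff.mp (hle hc)
    exact ⟨v, hv1, by rw [hv2, extC_resC hdeg]⟩
  · intro hV f hf
    obtain ⟨v, hv1, hv2⟩ := hV (extC k Δ p f) (deg_extC _ _ _) (mem_cycles_iff.mp hf)
    exact mem_boundaries_iff.mpr ⟨v, hv1, hv2⟩

lemma isComplex_restrict {Δ : Set (Finset (Fin n))} (hΔ : IsComplex Δ)
    (R : Finset (Fin n)) : IsComplex (restrict Δ R) :=
  fun F hF G hG => ⟨hΔ F hF.1 G hG, hG.trans hF.2⟩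

lemma isComplex_link {Δ : Set (Finset (Fin n))} (hΔ : IsComplex Δ)
    (S : Finset (Fin n)) : IsComplex (link Δ S) := by
  rintro F ⟨hd, hm⟩ G hG
  exact ⟨Finset.disjoint_of_subset_left hG hd,
    hΔ _ hm _ (Finset.union_subset_union hG (Finset.Subset.refl _))⟩

lemma V'_of_chains_trivial {Δ : Set (Finset (Fin n))} {p : ℤ}
    (h : ∀ u : TC k Δ, deg k Δ p u → u = 0) : V' k Δ p :=
  fun u hdeg hTD => ⟨0, fun _ h0 => absurd rfl h0, by rw [TD_zero, h u hdeg]⟩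

lemma V'_of_le_neg_two {Δ : Set (Finset (Fin n))} {p : ℤ} (hp : p ≤ -2) : V' k Δ p := by
  refine V'_of_chains_trivial fun u hdeg => ?_
  funext F
  by_contra h0
  have h1 := hdeg F h0
  have h2 : (0 : ℤ) ≤ (F.1.card : ℤ) := Int.natCast_nonneg _
  omega

lemma V'_empty (p : ℤ) : V' k (∅ : Set (Finset (Fin n))) p :=
  fun u _ _ => ⟨0, fun _ h0 => absurd rfl h0,
    funext fun F => absurd F.2 (Set.notMem_empty _)⟩

lemma V'_congr {Δ₁ Δ₂ : Set (Finset (Fin n))} (h : Δ₁ = Δ₂) {p : ℤ}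
    (hV : V' k Δ₁ p) : V' k Δ₂ p := by subst h; exact hV

lemma union_singleton_eq_insert (x : Fin n) (s : Finset (Fin n)) :
    s ∪ {x} = insert x s := by
  rw [Finset.insert_eq, Finset.union_comm]

lemma link_empty (Δ : Set (Finset (Fin n))) : link Δ (∅ : Finset (Fin n)) = Δ := by
  ext F; simp [link]

lemma restrict_compl_empty (Δ : Set (Finset (Fin n))) :
    restrict Δ ((∅ : Finset (Fin n))ᶜ) = Δ := by
  ext F; simp [restrict, Finset.compl_empty]

lemma restrict_restrict (Δ : Set (Finset (Fin n))) (R : Finset (Fin n)) (x : Fin n) :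
    restrict (restrict Δ Rᶜ) ({x}ᶜ) = restrict Δ ((insert x R)ᶜ) := by
  ext F
  simp only [restrict, Set.mem_setOf_eq, Finset.subset_iff, Finset.mem_compl,
    Finset.mem_insert, Finset.mem_singleton, and_assoc]
  constructor
  · rintro ⟨h1, h2, h3⟩
    exact ⟨h1, fun {a} ha h => by rcases h with h | h; exact h3 ha h; exact h2 ha h⟩
  · rintro ⟨h1, h2⟩
    exact ⟨h1, fun {a} ha h => h2 ha (Or.inr h), fun {a} ha h => h2 ha (Or.inl h)⟩

lemma link_restrict (Δ : Set (Finset (Fin n))) (R : Finset (Fin n)) (x : Fin n)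
    (hx : x ∉ R) : link (restrict Δ Rᶜ) {x} = restrict (link Δ {x}) Rᶜ := by
  ext F
  simp only [link, restrict, Set.mem_setOf_eq]
  constructor
  · rintro ⟨hd, hm, hsub⟩
    exact ⟨⟨hd, hm⟩, Finset.subset_union_left.trans hsub⟩
  · rintro ⟨⟨hd, hm⟩, hsub⟩
    refine ⟨hd, hm, Finset.union_subset hsub ?_⟩
    rw [Finset.singleton_subset_iff, Finset.mem_compl]
    exact hx

lemma link_link (Δ : Set (Finset (Fin n))) (S : Finset (Fin n)) (x : Fin n)
    (hx : x ∉ S) : link (link Δ {x}) S = link Δ (insert x S) := by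
  ext F
  simp only [link, Set.mem_setOf_eq, Finset.disjoint_insert_right,
    Finset.disjoint_singleton_right, Finset.mem_union, Finset.union_insert,
    union_singleton_eq_insert]
  constructor
  · rintro ⟨hdS, hdU, hm⟩
    push_neg at hdU
    exact ⟨⟨hdU.1, hdS⟩, hm⟩
  · rintro ⟨⟨hxF, hdS⟩, hm⟩
    exact ⟨hdS, by push_neg; exact ⟨hxF, hx⟩, hm⟩

lemma restrict_link_erase (Δ : Set (Finset (Fin n))) (S R : Finset (Fin n)) (x : Fin n)
    (hx : x ∈ S) : restrict (link Δ S) (Rᶜ) = restrict (link Δ S) ((R.erase x)ᶜ) := by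
  ext F
  simp only [restrict, link, Set.mem_setOf_eq, Finset.subset_iff, Finset.mem_compl,
    Finset.mem_erase]
  constructor
  · rintro ⟨⟨hd, hm⟩, hsub⟩
    exact ⟨⟨hd, hm⟩, fun {a} ha h => hsub ha h.2⟩
  · rintro ⟨⟨hd, hm⟩, hsub⟩
    refine ⟨⟨hd, hm⟩, fun {a} ha h => ?_⟩
    have hax : a ≠ x := fun he => (Finset.disjoint_left.mp hd ha) (he ▸ hx)
    exact hsub ha ⟨hax, h⟩

lemma link_eq_empty {Δ : Set (Finset (Fin n))} (hΔ : IsComplex Δ) {S : Finset (Fin n)}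
    (hS : S ∉ Δ) : link Δ S = ∅ := by
  ext F
  simp only [link, Set.mem_setOf_eq, Set.mem_empty_iff_false, iff_false, not_and]
  intro _ hm
  exact absurd (hΔ _ hm _ Finset.subset_union_right) hS

lemma restrict_of_empty (R : Finset (Fin n)) :
    restrict (∅ : Set (Finset (Fin n))) R = ∅ := by
  ext F; simp [restrict]

lemma deg_congr {Δ : Set (Finset (Fin n))} {p q : ℤ} (h : p = q) {u : TC k Δ}
    (hu : deg k Δ p u) : deg k Δ q u := h ▸ hu

lemma deg_add {Δ : Set (Finset (Fin n))} {p : ℤ} {u v : TC k Δ}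
    (hu : deg k Δ p u) (hv : deg k Δ p v) : deg k Δ p (u + v) := by
  intro F hF
  rw [Pi.add_apply] at hF
  by_cases h : u F = 0
  · exact hv F fun h' => hF (by rw [h, h', add_zero])
  · exact hu F h

lemma deg_neg {Δ : Set (Finset (Fin n))} {p : ℤ} {u : TC k Δ}
    (hu : deg k Δ p u) : deg k Δ p (-u) := by
  intro F hF
  rw [Pi.neg_apply, neg_ne_zero] at hF
  exact hu F hF

lemma deg_sub {Δ : Set (Finset (Fin n))} {p : ℤ} {u v : TC k Δ}
    (hu : deg k Δ p u) (hv : deg k Δ p v) : deg k Δ p (u - v) := by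
  rw [sub_eq_add_neg]
  exact deg_add hu (deg_neg hv)

lemma deg_TD {Δ : Set (Finset (Fin n))} {p : ℤ} {u : TC k Δ}
    (hu : deg k Δ p u) : deg k Δ (p - 1) (TD k Δ u) := by
  classical
  intro F hF
  rw [TD] at hF
  obtain ⟨y, -, hy⟩ := Finset.exists_ne_zero_of_sum_ne_zero hF
  rw [ne_eq, dite_eq_right_iff] at hy
  push_neg at hy
  obtain ⟨hc, hne⟩ := hy
  have hu0 : u ⟨insert y F.1, hc.2⟩ ≠ 0 := fun h0 => hne (by rw [h0, mul_zero])
  have := hu _ hu0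
  rw [Finset.card_insert_of_notMem hc.1] at this
  push_cast at this ⊢
  omega

variable (k)

open Classical in
/-- Extension by zero from the deletion subcomplex. -/
noncomputable def iot (Δ : Set (Finset (Fin n))) (x : Fin n)
    (g : TC k (restrict Δ ({x}ᶜ))) : TC k Δ := fun F =>
  if h : F.1 ∈ restrict Δ ({x}ᶜ) then g ⟨F.1, h⟩ else 0

/-- Projection onto the link (with sign). -/
noncomputable def proj (Δ : Set (Finset (Fin n))) (x : Fin n) (u : TC k Δ) :
    TC k (link Δ {x}) := fun F =>
  eps k x F.1 * u ⟨insert x F.1, by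
    have h : Disjoint F.1 {x} ∧ F.1 ∪ {x} ∈ Δ := F.2
    rw [← union_singleton_eq_insert]
    exact h.2⟩

open Classical in
/-- A section of `proj`. -/
noncomputable def lft (Δ : Set (Finset (Fin n))) (x : Fin n)
    (h : TC k (link Δ {x})) : TC k Δ := fun F =>
  if hx : x ∈ F.1 then
    eps k x (F.1.erase x) * h ⟨F.1.erase x, by
      constructor
      · rw [Finset.disjoint_singleton_right]; exact Finset.notMem_erase _ _
      · rw [union_singleton_eq_insert, Finset.insert_erase hx]; exact F.2⟩
  else 0

variable {k}

lemma iot_zero (Δ : Set (Finset (Fin n))) (x : Fin n) :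
    iot k Δ x 0 = 0 := by
  funext F
  rw [iot]
  split_ifs <;> rfl

lemma proj_zero (Δ : Set (Finset (Fin n))) (x : Fin n) :
    proj k Δ x 0 = 0 := by
  funext F
  rw [proj]
  exact mul_zero _

lemma proj_add (Δ : Set (Finset (Fin n))) (x : Fin n) (u v : TC k Δ) :
    proj k Δ x (u + v) = proj k Δ x u + proj k Δ x v := by
  funext F
  simp only [proj, Pi.add_apply]
  ring

lemma proj_sub (Δ : Set (Finset (Fin n))) (x : Fin n) (u v : TC k Δ) :
    proj k Δ x (u - v) = proj k Δ x u - proj k Δ x v := by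
  funext F
  simp only [proj, Pi.sub_apply]
  ring

lemma proj_iot (Δ : Set (Finset (Fin n))) (x : Fin n) (g : TC k (restrict Δ ({x}ᶜ))) :
    proj k Δ x (iot k Δ x g) = 0 := by
  funext F
  simp only [proj, iot]
  rw [dif_neg, mul_zero]
  · rfl
  · rintro ⟨-, hsub⟩
    exact (Finset.subset_compl_singleton.mp hsub) (Finset.mem_insert_self _ _)

lemma proj_lft (Δ : Set (Finset (Fin n))) (x : Fin n) (h : TC k (link Δ {x})) :
    proj k Δ x (lft k Δ x h) = h := by
  funext F
  have hxF : x ∉ F.1 := Finset.disjoint_singleton_right.mp (F.2 : _ ∧ _).1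
  simp only [proj, lft]
  rw [dif_pos (Finset.mem_insert_self x F.1)]
  have he : (insert x F.1).erase x = F.1 := Finset.erase_insert hxF
  have harg : ∀ (pf : (insert x F.1).erase x ∈ link Δ {x}),
      h ⟨(insert x F.1).erase x, pf⟩ = h F := by
    intro pf
    congr 1
    exact Subtype.ext he
  erw [harg]
  rw [show eps k x ((insert x F.1).erase x) = eps k x F.1 by rw [he]]
  rw [← mul_assoc, eps_mul_self, one_mul]

lemma iot_injective {Δ : Set (Finset (Fin n))} {x : Fin n}
    {g g' : TC k (restrict Δ ({x}ᶜ))} (h : iot k Δ x g = iot k Δ x g') : g = g' := by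
  funext F
  have := congrFun h ⟨F.1, F.2.1⟩
  rwa [iot, iot, dif_pos F.2, dif_pos F.2] at this

lemma exists_iot {Δ : Set (Finset (Fin n))} {x : Fin n} {u : TC k Δ}
    (h : proj k Δ x u = 0) : ∃ g, iot k Δ x g = u := by
  refine ⟨fun F => u ⟨F.1, F.2.1⟩, funext fun F => ?_⟩
  rw [iot]
  split_ifs with hF
  · rfl
  · have hxF : x ∈ F.1 := by
      by_contra hx
      exact hF ⟨F.2, Finset.subset_compl_singleton.mpr hx⟩
    have hlink : F.1.erase x ∈ link Δ {x} := by
      constructor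
      · rw [Finset.disjoint_singleton_right]; exact Finset.notMem_erase _ _
      · rw [union_singleton_eq_insert, Finset.insert_erase hxF]; exact F.2
    have h0 := congrFun h ⟨F.1.erase x, hlink⟩
    rw [proj, Pi.zero_apply] at h0
    rcases mul_eq_zero.mp h0 with h1 | h1
    · exact absurd h1 (eps_ne_zero _ _)
    · rw [← h1]
      congr 1
      exact Subtype.ext (Finset.insert_erase hxF)

lemma deg_of_iot {Δ : Set (Finset (Fin n))} {x : Fin n} {p : ℤ}
    {g : TC k (restrict Δ ({x}ᶜ))} (h : deg k Δ p (iot k Δ x g)) :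
    deg k (restrict Δ ({x}ᶜ)) p g := by
  intro F hF
  refine h ⟨F.1, F.2.1⟩ ?_
  rw [iot, dif_pos F.2]
  exact hF

lemma deg_iot {Δ : Set (Finset (Fin n))} {x : Fin n} {p : ℤ}
    {g : TC k (restrict Δ ({x}ᶜ))} (h : deg k (restrict Δ ({x}ᶜ)) p g) :
    deg k Δ p (iot k Δ x g) := by
  intro F hF
  rw [iot] at hF
  split_ifs at hF with hm
  · exact h ⟨F.1, hm⟩ hF
  · exact absurd rfl hF

lemma deg_proj {Δ : Set (Finset (Fin n))} {x : Fin n} {p : ℤ} {u : TC k Δ}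
    (h : deg k Δ p u) : deg k (link Δ {x}) (p - 1) (proj k Δ x u) := by
  intro F hF
  rw [proj] at hF
  have hxF : x ∉ F.1 := Finset.disjoint_singleton_right.mp (F.2 : _ ∧ _).1
  have hu : u ⟨insert x F.1, _⟩ ≠ 0 := fun h0 => hF (by rw [h0, mul_zero])
  have := h _ hu
  rw [Finset.card_insert_of_notMem hxF] at this
  push_cast at this ⊢
  omega

lemma deg_lft {Δ : Set (Finset (Fin n))} {x : Fin n} {p : ℤ} {h : TC k (link Δ {x})}
    (hh : deg k (link Δ {x}) p h) : deg k Δ (p + 1) (lft k Δ x h) := by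
  intro F hF
  rw [lft] at hF
  split_ifs at hF with hx
  · have hne : h ⟨F.1.erase x, _⟩ ≠ 0 := right_ne_zero_of_mul hF
    have h1 := hh _ hne
    rw [Finset.card_erase_of_mem hx] at h1
    have h2 : 1 ≤ F.1.card := Finset.card_pos.mpr ⟨x, hx⟩
    push_cast at h1 ⊢
    omega
  · exact absurd rfl hF

lemma TD_iot (Δ : Set (Finset (Fin n))) (x : Fin n) (g : TC k (restrict Δ ({x}ᶜ))) :
    TD k Δ (iot k Δ x g) = iot k Δ x (TD k (restrict Δ ({x}ᶜ)) g) := by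
  classical
  funext F
  by_cases hA : F.1 ∈ restrict Δ ({x}ᶜ)
  · have hxF : x ∉ F.1 := Finset.subset_compl_singleton.mp hA.2
    conv_rhs => rw [iot, dif_pos hA]
    rw [TD, TD]
    refine Finset.sum_congr rfl fun y _ => ?_
    by_cases hyx : y = x
    · subst hyx
      rw [dif_neg (fun hc : y ∉ F.1 ∧ insert y F.1 ∈ restrict Δ ({y}ᶜ) =>
        (Finset.subset_compl_singleton.mp hc.2.2) (Finset.mem_insert_self _ _))]
      split_ifs with hc
      · rw [iot, dif_neg (fun hm : insert y F.1 ∈ restrict Δ ({y}ᶜ) =>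
          (Finset.subset_compl_singleton.mp hm.2) (Finset.mem_insert_self _ _)), mul_zero]
      · rfl
    · by_cases hc : y ∉ F.1 ∧ insert y F.1 ∈ Δ
      · have hsub : insert y F.1 ⊆ ({x} : Finset (Fin n))ᶜ := by
          rw [Finset.subset_compl_singleton, Finset.mem_insert]
          push_neg
          exact ⟨fun h => hyx h.symm, hxF⟩
        rw [dif_pos hc, dif_pos (⟨hc.1, hc.2, hsub⟩ :
            y ∉ F.1 ∧ insert y F.1 ∈ restrict Δ ({x}ᶜ)), iot]
        split_ifs with hm
        · rfl
        · exact absurd ⟨hc.2, hsub⟩ hm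
      · rw [dif_neg hc, dif_neg (fun hm : y ∉ F.1 ∧ insert y F.1 ∈ restrict Δ ({x}ᶜ) =>
          hc ⟨hm.1, hm.2.1⟩)]
  · have hxF : x ∈ F.1 := by
      by_contra hx
      exact hA ⟨F.2, Finset.subset_compl_singleton.mpr hx⟩
    conv_rhs => rw [iot, dif_neg hA]
    rw [TD]
    refine Finset.sum_eq_zero fun y _ => ?_
    split_ifs with hc
    · rw [iot, dif_neg (fun hm : insert y F.1 ∈ restrict Δ ({x}ᶜ) =>
        (Finset.subset_compl_singleton.mp hm.2) (Finset.mem_insert_of_mem hxF)), mul_zero]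
    · rfl

lemma TD_proj (Δ : Set (Finset (Fin n))) (x : Fin n) (u : TC k Δ) :
    TD k (link Δ {x}) (proj k Δ x u) = - proj k Δ x (TD k Δ u) := by
  classical
  funext F
  have hmem : Disjoint F.1 {x} ∧ F.1 ∪ {x} ∈ Δ := F.2
  have hxF : x ∉ F.1 := Finset.disjoint_singleton_right.mp hmem.1
  rw [Pi.neg_apply]
  conv_rhs => rw [proj]
  rw [TD, TD, Finset.mul_sum, ← Finset.sum_neg_distrib]
  refine Finset.sum_congr rfl fun y _ => ?_
  by_cases hyx : y = x
  · subst hyx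
    rw [dif_neg (fun hc : y ∉ F.1 ∧ insert y F.1 ∈ link Δ {y} =>
      Finset.disjoint_singleton_right.mp hc.2.1 (Finset.mem_insert_self _ _))]
    rw [dif_neg (fun hc : y ∉ insert y F.1 ∧ _ => hc.1 (Finset.mem_insert_self _ _))]
    rw [mul_zero, neg_zero]
  · by_cases hc : y ∉ F.1 ∧ insert y (insert x F.1) ∈ Δ
    · have hcL : y ∉ F.1 ∧ insert y F.1 ∈ link Δ {x} := by
        refine ⟨hc.1, ?_, ?_⟩
        · rw [Finset.disjoint_singleton_right, Finset.mem_insert]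
          push_neg
          exact ⟨fun h => hyx h.symm, hxF⟩
        · rw [union_singleton_eq_insert, Finset.insert_comm]
          exact hc.2
      have hcR : y ∉ insert x F.1 ∧ insert y (insert x F.1) ∈ Δ := by
        refine ⟨?_, hc.2⟩
        rw [Finset.mem_insert]
        push_neg
        exact ⟨hyx, hc.1⟩
      rw [dif_pos hcL, dif_pos hcR, proj]
      have harg : ∀ (pf : insert x (insert y F.1) ∈ Δ),
          u ⟨insert x (insert y F.1), pf⟩ = u ⟨insert y (insert x F.1), hc.2⟩ := by
        intro pf
        congr 1
        exact Subtype.ext (Finset.insert_comm _ _ _)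
      rw [harg]
      have hskew := eps_skew (k := k) (G := F.1) hyx hc.1 hxF
      set c := u ⟨insert y (insert x F.1), hc.2⟩
      calc eps k y F.1 * (eps k x (insert y F.1) * c)
          = -(eps k x F.1 * (eps k y (insert x F.1) * c)) +
            (eps k y F.1 * eps k x (insert y F.1) +
              eps k x F.1 * eps k y (insert x F.1)) * c := by ring
        _ = -(eps k x F.1 * (eps k y (insert x F.1) * c)) := by rw [hskew, zero_mul, add_zero]
    · have hnL : ¬(y ∉ F.1 ∧ insert y F.1 ∈ link Δ {x}) := by
        rintro ⟨h1, h2, h3⟩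
        rw [union_singleton_eq_insert, Finset.insert_comm] at h3
        exact hc ⟨h1, h3⟩
      have hnR : ¬(y ∉ insert x F.1 ∧ insert y (insert x F.1) ∈ Δ) := by
        rintro ⟨h1, h2⟩
        exact hc ⟨fun h => h1 (Finset.mem_insert_of_mem h), h2⟩
      rw [dif_neg hnL, dif_neg hnR, mul_zero, neg_zero]


lemma chaseI {Δ : Set (Finset (Fin n))} (hΔ : IsComplex Δ) (x : Fin n) (p : ℤ)
    (hA : V' k (restrict Δ ({x}ᶜ)) p) (hL : V' k (link Δ {x}) (p - 1)) :
    V' k Δ p := by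
  intro u hu hdu
  have hπdeg : deg k (link Δ {x}) (p - 1) (proj k Δ x u) := deg_proj hu
  have hπcyc : TD k (link Δ {x}) (proj k Δ x u) = 0 := by
    rw [TD_proj, hdu, proj_zero, neg_zero]
  obtain ⟨w, hw1, hw2⟩ := hL _ hπdeg hπcyc
  set f' := lft k Δ x w with hf'
  have hf'deg : deg k Δ (p + 1) f' :=
    deg_congr (by ring) (deg_lft (deg_congr (show p - 1 + 1 = p by ring) hw1))
  have hπz : proj k Δ x (u + TD k Δ f') = 0 := by
    rw [proj_add]
    have h1 : proj k Δ x (TD k Δ f') = - TD k (link Δ {x}) (proj k Δ x f') := by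
      rw [TD_proj, neg_neg]
    rw [h1, hf', proj_lft, hw2, add_neg_cancel]
  obtain ⟨g, hg⟩ := exists_iot hπz
  have hzdeg : deg k Δ p (u + TD k Δ f') :=
    deg_add hu (deg_congr (show p + 1 - 1 = p by ring) (deg_TD hf'deg))
  have hgdeg : deg k (restrict Δ ({x}ᶜ)) p g := deg_of_iot (hg ▸ hzdeg)
  have hgcyc : TD k (restrict Δ ({x}ᶜ)) g = 0 := by
    apply iot_injective (x := x)
    rw [← TD_iot, hg, TD_add, hdu, TD_TD _ hΔ, zero_add, iot_zero]
  obtain ⟨g', hg'1, hg'2⟩ := hA g hgdeg hgcyc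
  refine ⟨iot k Δ x g' - f', deg_sub (deg_iot hg'1) hf'deg, ?_⟩
  rw [TD_sub, TD_iot, hg'2, hg]
  abel

lemma chaseII {Δ : Set (Finset (Fin n))} (hΔ : IsComplex Δ) (x : Fin n) (p : ℤ)
    (hD : V' k Δ p) (hL : V' k (link Δ {x}) p) :
    V' k (restrict Δ ({x}ᶜ)) p := by
  intro g hg hgc
  have hι : TD k Δ (iot k Δ x g) = 0 := by rw [TD_iot, hgc, iot_zero]
  obtain ⟨f, hf1, hf2⟩ := hD (iot k Δ x g) (deg_iot hg) hι
  have hπfc : TD k (link Δ {x}) (proj k Δ x f) = 0 := by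
    rw [TD_proj, hf2, proj_iot, neg_zero]
  obtain ⟨w, hw1, hw2⟩ :=
    hL _ (deg_congr (show p + 1 - 1 = p by ring) (deg_proj hf1)) hπfc
  set f'' := lft k Δ x w with hf''
  have hf''deg : deg k Δ (p + 2) f'' :=
    deg_congr (by ring) (deg_lft hw1)
  have hπz : proj k Δ x (f + TD k Δ f'') = 0 := by
    rw [proj_add]
    have h1 : proj k Δ x (TD k Δ f'') = - TD k (link Δ {x}) (proj k Δ x f'') := by
      rw [TD_proj, neg_neg]
    rw [h1, hf'', proj_lft, hw2, add_neg_cancel]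
  obtain ⟨g₁, hg₁⟩ := exists_iot hπz
  have hzdeg : deg k Δ (p + 1) (f + TD k Δ f'') :=
    deg_add hf1 (deg_congr (show p + 2 - 1 = p + 1 by ring) (deg_TD hf''deg))
  refine ⟨g₁, deg_of_iot (hg₁ ▸ hzdeg), ?_⟩
  apply iot_injective (x := x)
  rw [← TD_iot, hg₁, TD_add, hf2, TD_TD _ hΔ, add_zero]

lemma chaseIII {Δ : Set (Finset (Fin n))} (hΔ : IsComplex Δ) (x : Fin n) (p : ℤ)
    (hD : V' k Δ (p + 1)) (hA : V' k (restrict Δ ({x}ᶜ)) p) :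
    V' k (link Δ {x}) p := by
  intro h hdeg hcyc
  set f := lft k Δ x h with hf
  have hfdeg : deg k Δ (p + 1) f := deg_lft hdeg
  have hπ : proj k Δ x (TD k Δ f) = 0 := by
    have h1 := TD_proj (k := k) Δ x f
    rw [hf, proj_lft, hcyc] at h1
    rw [← neg_eq_zero, ← h1]
  obtain ⟨g, hg⟩ := exists_iot hπ
  have hgdeg : deg k (restrict Δ ({x}ᶜ)) p g :=
    deg_of_iot (hg ▸ deg_congr (show p + 1 - 1 = p by ring) (deg_TD hfdeg))
  have hgcyc : TD k (restrict Δ ({x}ᶜ)) g = 0 :=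
    iot_injective (by rw [← TD_iot, hg, TD_TD _ hΔ, iot_zero])
  obtain ⟨g', hg'1, hg'2⟩ := hA g hgdeg hgcyc
  have hwdeg : deg k Δ (p + 1) (f - iot k Δ x g') := deg_sub hfdeg (deg_iot hg'1)
  have hwcyc : TD k Δ (f - iot k Δ x g') = 0 := by
    rw [TD_sub, TD_iot, hg'2, hg, sub_self]
  obtain ⟨v, hv1, hv2⟩ := hD _ hwdeg hwcyc
  refine ⟨- proj k Δ x v, deg_congr (by ring) (deg_neg (deg_proj hv1)), ?_⟩
  rw [TD_neg, TD_proj, neg_neg, hv2, proj_sub, proj_iot, sub_zero, hf, proj_lft]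

lemma link_link' (Δ : Set (Finset (Fin n))) (S : Finset (Fin n)) (x : Fin n)
    (hx : x ∉ S) : link (link Δ S) {x} = link Δ (insert x S) := by
  ext F
  simp only [link, Set.mem_setOf_eq, Finset.disjoint_insert_right,
    Finset.disjoint_singleton_right, union_singleton_eq_insert, Finset.insert_union,
    Finset.union_insert]
  constructor
  · rintro ⟨hxF, hd, hm⟩
    rw [Finset.disjoint_insert_left] at hd
    exact ⟨⟨hxF, hd.2⟩, hm⟩
  · rintro ⟨⟨hxF, hd⟩, hm⟩
    exact ⟨hxF, Finset.disjoint_insert_left.mpr ⟨hx, hd⟩, hm⟩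

/-- The main induction: from the vanishing at the critical degrees (avoiding a
forbidden vertex set `E`), vanishing for all restricted links. -/
lemma master : ∀ (d : ℕ) (Δ : Set (Finset (Fin n))) (E : Finset (Fin n)),
    IsComplex Δ → (∀ F ∈ Δ, Disjoint F E) → (E.card + d ≤ n) →
    (∀ (p : ℤ) (R : Finset (Fin n)), Disjoint R E → p + R.card = (d : ℤ) - 2 →
      V' k (restrict Δ Rᶜ) p) →
    ∀ S ∈ Δ, ∀ (R : Finset (Fin n)), Disjoint R E → ∀ p : ℤ,
      p + S.card + R.card ≤ (d : ℤ) - 2 → V' k (restrict (link Δ S) Rᶜ) p := by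
  intro d
  induction d with
  | zero =>
    intro Δ E hΔ hE hEn hRHS S hS R hRE p hsum
    refine V'_of_le_neg_two ?_
    have h1 : (0:ℤ) ≤ S.card := Int.natCast_nonneg _
    have h2 : (0:ℤ) ≤ R.card := Int.natCast_nonneg _
    omega
  | succ d ih =>
    intro Δ E hΔ hE hEn hRHS
    have hlink : ∀ x : Fin n, {x} ∈ Δ →
        ∀ S' ∈ link Δ {x}, ∀ (R : Finset (Fin n)), Disjoint R (insert x E) → ∀ p : ℤ,
          p + S'.card + R.card ≤ (d : ℤ) - 2 →
          V' k (restrict (link (link Δ {x}) S') Rᶜ) p := by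
      intro x hx
      have hxE : x ∉ E := by
        have h := hE {x} hx
        rw [Finset.disjoint_singleton_left] at h
        exact h
      refine ih (link Δ {x}) (insert x E) (isComplex_link hΔ _) ?_ ?_ ?_
      · rintro F ⟨hdx, hm⟩
        refine Finset.disjoint_insert_right.mpr
          ⟨Finset.disjoint_singleton_right.mp hdx, ?_⟩
        exact hE F (hΔ _ hm _ Finset.subset_union_left)
      · rw [Finset.card_insert_of_notMem hxE]
        omega
      · intro p R hRE hpR
        obtain ⟨hxR, hREo⟩ := Finset.disjoint_insert_right.mp hRE
        have hB : IsComplex (restrict Δ Rᶜ) := isComplex_restrict hΔ _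
        have h1 : V' k (restrict Δ Rᶜ) (p + 1) :=
          hRHS (p+1) R hREo (by push_cast at hpR ⊢; omega)
        have h2 : V' k (restrict (restrict Δ Rᶜ) ({x}ᶜ)) p := by
          refine V'_congr (restrict_restrict Δ R x).symm ?_
          refine hRHS p (insert x R) (Finset.disjoint_insert_left.mpr ⟨hxE, hREo⟩) ?_
          rw [Finset.card_insert_of_notMem hxR]
          push_cast at hpR ⊢
          omega
        exact V'_congr (link_restrict Δ R x hxR) (chaseIII hB x p h1 h2)
    have hCC : ∀ (s : ℕ) (p : ℤ) (R : Finset (Fin n)), Disjoint R E →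
        p + R.card + s = (d : ℤ) - 1 → V' k (restrict Δ Rᶜ) p := by
      intro s
      induction s with
      | zero =>
        intro p R hRE h
        exact hRHS p R hRE (by push_cast at h ⊢; omega)
      | succ s ihs =>
        intro p R hRE hsum
        rcases le_or_gt p (-2) with hp | hp
        · exact V'_of_le_neg_two hp
        · have hcard : ((R ∪ E).card : ℤ) < n := by
            have h1 : (R ∪ E).card ≤ R.card + E.card := Finset.card_union_le _ _
            have h2 : E.card + (d + 1) ≤ n := hEn
            push_cast at hsum ⊢
            omega
          have hne : ((R ∪ E)ᶜ : Finset (Fin n)).Nonempty := by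
            rw [← Finset.card_pos, Finset.card_compl, Fintype.card_fin]
            omega
          obtain ⟨x, hxc⟩ := hne
          have hx : x ∉ R ∪ E := Finset.mem_compl.mp hxc
          have hxR : x ∉ R := fun h => hx (Finset.mem_union_left _ h)
          have hxE : x ∉ E := fun h => hx (Finset.mem_union_right _ h)
          have hB : IsComplex (restrict Δ Rᶜ) := isComplex_restrict hΔ _
          have hA : V' k (restrict (restrict Δ Rᶜ) ({x}ᶜ)) p := by
            refine V'_congr (restrict_restrict Δ R x).symm ?_
            refine ihs p (insert x R) (Finset.disjoint_insert_left.mpr ⟨hxE, hRE⟩) ?_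
            rw [Finset.card_insert_of_notMem hxR]
            push_cast at hsum ⊢
            omega
          have hLv : V' k (link (restrict Δ Rᶜ) {x}) (p - 1) := by
            by_cases hxΔ : ({x} : Finset (Fin n)) ∈ Δ
            · have h0 : (∅ : Finset (Fin n)) ∈ link Δ {x} :=
                ⟨Finset.disjoint_empty_left _, by rw [Finset.empty_union]; exact hxΔ⟩
              have hm := hlink x hxΔ ∅ h0 R
                (Finset.disjoint_insert_right.mpr ⟨hxR, hRE⟩) (p-1)
                (by rw [Finset.card_empty]; push_cast at hsum ⊢; omega)
              refine V'_congr ?_ hm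
              rw [link_empty, ← link_restrict Δ R x hxR]
            · have he : link (restrict Δ Rᶜ) {x} = ∅ :=
                link_eq_empty hB (fun hm => hxΔ hm.1)
              exact V'_congr he.symm (V'_empty _)
          exact chaseI hB x p hA hLv
    intro S hS R hRE p hsum
    rcases Finset.eq_empty_or_nonempty S with rfl | hSne
    · have hV : V' k (restrict Δ Rᶜ) p := by
        rcases le_or_gt p (-2) with hp | hp
        · exact V'_of_le_neg_two hp
        · have hnn : (0 : ℤ) ≤ (d : ℤ) - 1 - p - R.card := by
            rw [Finset.card_empty] at hsum
            push_cast at hsum ⊢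
            omega
          refine hCC ((d : ℤ) - 1 - p - R.card).toNat p R hRE ?_
          rw [Int.toNat_of_nonneg hnn]
          ring
      refine V'_congr ?_ hV
      rw [link_empty]
    · obtain ⟨x, hxS⟩ := hSne
      have hxΔ : ({x} : Finset (Fin n)) ∈ Δ :=
        hΔ S hS {x} (Finset.singleton_subset_iff.mpr hxS)
      have hS'mem : S.erase x ∈ link Δ {x} := by
        constructor
        · rw [Finset.disjoint_singleton_right]; exact Finset.notMem_erase _ _
        · rw [union_singleton_eq_insert, Finset.insert_erase hxS]; exact hS
      have hR'E : Disjoint (R.erase x) (insert x E) :=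
        Finset.disjoint_insert_right.mpr ⟨Finset.notMem_erase _ _,
          Finset.disjoint_of_subset_left (Finset.erase_subset _ _) hRE⟩
      have hsum' : p + (S.erase x).card + (R.erase x).card ≤ (d : ℤ) - 2 := by
        have h1 : (S.erase x).card = S.card - 1 := Finset.card_erase_of_mem hxS
        have h2 : (R.erase x).card ≤ R.card := Finset.card_le_card (Finset.erase_subset _ _)
        have h3 : 1 ≤ S.card := Finset.card_pos.mpr ⟨x, hxS⟩
        rw [h1]
        push_cast at hsum ⊢
        omega
      have hmain := hlink x hxΔ (S.erase x) hS'mem (R.erase x) hR'E p hsum'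
      refine V'_congr ?_ hmain
      rw [link_link Δ (S.erase x) x (Finset.notMem_erase _ _), Finset.insert_erase hxS]
      exact (restrict_link_erase Δ S R x hxS).symm

/-- The easy direction: Cohen–Macaulayness gives vanishing for all restricted links. -/
lemma mpAux {Δ : Set (Finset (Fin n))} (hΔ : IsComplex Δ) (d : ℕ)
    (hLHS : ∀ S ∈ Δ, ∀ p : ℤ, p + S.card ≤ (d:ℤ) - 2 → V' k (link Δ S) p) :
    ∀ (m : ℕ) (R : Finset (Fin n)), R.card = m → ∀ S ∈ Δ, ∀ p : ℤ,
      p + S.card + R.card ≤ (d:ℤ) - 2 → V' k (restrict (link Δ S) Rᶜ) p := by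
  intro m
  induction m using Nat.strong_induction_on with
  | _ m ihm =>
    intro R hR S hS p hsum
    rcases Finset.eq_empty_or_nonempty R with rfl | ⟨x, hxR⟩
    · refine V'_congr (restrict_compl_empty _).symm ?_
      refine hLHS S hS p ?_
      rw [Finset.card_empty] at hsum
      push_cast at hsum ⊢
      omega
    · have hR' : (R.erase x).card < m := by
        rw [← hR]; exact Finset.card_erase_lt_of_mem hxR
      have hRcard : 1 ≤ R.card := Finset.card_pos.mpr ⟨x, hxR⟩
      have hRe : ((R.erase x).card : ℤ) = (R.card : ℤ) - 1 := by
        rw [Finset.card_erase_of_mem hxR]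
        push_cast
        omega
      by_cases hxS : x ∈ S
      · refine V'_congr (restrict_link_erase Δ S R x hxS).symm ?_
        refine ihm (R.erase x).card hR' (R.erase x) rfl S hS p ?_
        push_cast at hsum ⊢
        omega
      · have hlkC : IsComplex (link Δ S) := isComplex_link hΔ _
        have hB : IsComplex (restrict (link Δ S) ((R.erase x)ᶜ)) := isComplex_restrict hlkC _
        have hD : V' k (restrict (link Δ S) ((R.erase x)ᶜ)) p := by
          refine ihm (R.erase x).card hR' (R.erase x) rfl S hS p ?_
          push_cast at hsum ⊢
          omega
        have hLv : V' k (link (restrict (link Δ S) ((R.erase x)ᶜ)) {x}) p := by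
          have heq1 : link (restrict (link Δ S) ((R.erase x)ᶜ)) {x}
              = restrict (link (link Δ S) {x}) ((R.erase x)ᶜ) :=
            link_restrict _ (R.erase x) x (Finset.notMem_erase _ _)
          have heq2 : link (link Δ S) {x} = link Δ (insert x S) := link_link' Δ S x hxS
          rw [heq1, heq2]
          by_cases hmem : insert x S ∈ Δ
          · refine ihm (R.erase x).card hR' (R.erase x) rfl (insert x S) hmem p ?_
            rw [Finset.card_insert_of_notMem hxS]
            push_cast at hsum ⊢
            omega
          · rw [link_eq_empty hΔ hmem, restrict_of_empty]
            exact V'_empty _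
        have hc := chaseII hB x p hD hLv
        refine V'_congr ?_ hc
        rw [restrict_restrict (link Δ S) (R.erase x) x, Finset.insert_erase hxR]

end Aux

/-- `Δ` is Cohen-Macaulay iff `H̃_p(Δ_{-R}) = 0` for `p + |R| = d - 2`. -/
theorem stmt6 (k : Type) [Field k] {n : ℕ} (Δ : Set (Finset (Fin n)))
    (hΔ : IsComplex Δ) (d : ℕ) (hd : IsDim Δ d) :
    (∀ S ∈ Δ, ∀ p : ℤ, p + S.card ≤ (d : ℤ) - 2 →
        Subsingleton (ReducedHomology k (link Δ S) p)) ↔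
    (∀ (p : ℤ) (R : Finset (Fin n)), p + R.card = (d : ℤ) - 2 →
        Subsingleton (ReducedHomology k (restrict Δ Rᶜ) p)) := by
  have hn : d ≤ n := by
    obtain ⟨F, hF, hcard⟩ := hd.2
    calc d = F.card := hcard.symm
      _ ≤ n := by simpa using Finset.card_le_univ F
  have hem : (∅ : Finset (Fin n)) ∈ Δ := by
    obtain ⟨F, hF, -⟩ := hd.2
    exact hΔ F hF ∅ (Finset.empty_subset _)
  constructor
  · intro hCM p R hpR
    rw [subsingleton_iff_V']
    have hLHS : ∀ S ∈ Δ, ∀ p : ℤ, p + S.card ≤ (d:ℤ) - 2 → V' k (link Δ S) p := by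
      intro S hS p' hp'
      rw [← subsingleton_iff_V']
      exact hCM S hS p' hp'
    have hm := mpAux hΔ d hLHS R.card R rfl ∅ hem p
      (by rw [Finset.card_empty]; push_cast; push_cast at hpR; omega)
    refine V'_congr ?_ hm
    rw [link_empty]
  · intro hRes S hS p hp
    rw [subsingleton_iff_V']
    have hRHS : ∀ (p : ℤ) (R : Finset (Fin n)), Disjoint R (∅ : Finset (Fin n)) →
        p + R.card = (d:ℤ) - 2 → V' k (restrict Δ Rᶜ) p := by
      intro p' R' _ h
      rw [← subsingleton_iff_V']
      exact hRes p' R' h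
    have hm := master d Δ ∅ hΔ (fun F _ => Finset.disjoint_empty_right _)
      (by simpa using hn) hRHS S hS ∅ (Finset.disjoint_empty_left _) p
      (by rw [Finset.card_empty]; push_cast; omega)
    exact V'_congr (by rw [restrict_compl_empty]) hm

end SCx
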